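/- Let r' : {(x,y) : x > 0} × ℝ → ℝ³ be defined by r'(x,y) = ( (1/√3)(e^y/sinh(√3 x))(sinh²(√3 x) + 3y), −(1/√3) e^{−2y} coth(√3 x), −(1/√3) e^y / sinh(√3 x) ), viewed as taking values in ℂ³. Then for all x > 0, y ∈ ℝ, the complex 3×3 determinant satisfies |det[ ∂ₓr' − i ∂ᵧr', ∂ₓₓr' − ∂ᵧᵧr' − 2i ∂ₓᵧr', r' ]| = 8. -/

import Mathlib

/-- Real hyperbolic cotangent. -/
noncomputable def coth (x : ℝ) : ℝ := Real.cosh x / Real.sinh x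

/-- The isothermal parametrization of Hildebrand's case-1 affine sphere. -/
noncomputable def r' (x y : ℝ) : Fin 3 → ℝ :=
  ![ (1 / Real.sqrt 3) * (Real.exp y / Real.sinh (Real.sqrt 3 * x)) *
       ((Real.sinh (Real.sqrt 3 * x)) ^ 2 + 3 * y),
     -(1 / Real.sqrt 3) * Real.exp (-2 * y) * coth (Real.sqrt 3 * x),
     -(1 / Real.sqrt 3) * Real.exp y / Real.sinh (Real.sqrt 3 * x) ]

/-- `∂ₓ r'`. -/
noncomputable def rx' (x y : ℝ) : Fin 3 → ℝ := fun i => deriv (fun s => r' s y i) x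
/-- `∂ᵧ r'`. -/
noncomputable def ry' (x y : ℝ) : Fin 3 → ℝ := fun i => deriv (fun s => r' x s i) y
/-- `∂ₓₓ r'`. -/
noncomputable def rxx' (x y : ℝ) : Fin 3 → ℝ := fun i => deriv (fun s => rx' s y i) x
/-- `∂ₓᵧ r'`. -/
noncomputable def rxy' (x y : ℝ) : Fin 3 → ℝ := fun i => deriv (fun s => rx' x s i) y
/-- `∂ᵧᵧ r'`. -/
noncomputable def ryy' (x y : ℝ) : Fin 3 → ℝ := fun i => deriv (fun s => ry' x s i) y

section Aux

local notation "S3" => Real.sqrt 3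
local notation "sh" x => Real.sinh (Real.sqrt 3 * x)
local notation "ch" x => Real.cosh (Real.sqrt 3 * x)

lemma S3_pos : 0 < S3 := Real.sqrt_pos.mpr (by norm_num)

lemma S3_ne : S3 ≠ 0 := ne_of_gt S3_pos

lemma sh_pos {x : ℝ} (hx : 0 < x) : 0 < sh x :=
  Real.sinh_pos_iff.mpr (mul_pos S3_pos hx)

lemma sh_ne {x : ℝ} (hx : 0 < x) : (sh x) ≠ 0 := ne_of_gt (sh_pos hx)

lemma hasDerivAt_sh (x : ℝ) : HasDerivAt (fun s => sh s) (S3 * ch x) x := by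
  have h := (Real.hasDerivAt_sinh (S3 * x)).comp x ((hasDerivAt_id x).const_mul S3)
  simpa [Function.comp_def, mul_comm] using h

lemma hasDerivAt_ch (x : ℝ) : HasDerivAt (fun s => ch s) (S3 * sh x) x := by
  have h := (Real.hasDerivAt_cosh (S3 * x)).comp x ((hasDerivAt_id x).const_mul S3)
  simpa [Function.comp_def, mul_comm] using h

lemma hasDerivAt_exp2 (y : ℝ) :
    HasDerivAt (fun t : ℝ => Real.exp (-2 * t)) (-2 * Real.exp (-2 * y)) y := by
  have h := (Real.hasDerivAt_exp (-2 * y)).comp y ((hasDerivAt_id y).const_mul (-2))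
  simpa [Function.comp_def, mul_comm] using h

/- component value lemmas -/
lemma r'_0 (x y : ℝ) :
    r' x y 0 = Real.exp y * ((sh x) ^ 2 + 3 * y) / (S3 * (sh x)) := by
  simp [r']; ring

lemma r'_1 (x y : ℝ) :
    r' x y 1 = -(Real.exp (-2 * y) * (ch x)) / (S3 * (sh x)) := by
  simp [r', coth]; ring

lemma r'_2 (x y : ℝ) :
    r' x y 2 = -Real.exp y / (S3 * (sh x)) := by
  simp [r']; ring

/- first x-derivatives -/
lemma rx'_0 {x : ℝ} (hx : 0 < x) (y : ℝ) :
    rx' x y 0 = Real.exp y * (ch x) * ((sh x) ^ 2 - 3 * y) / (sh x) ^ 2 := by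
  have h : HasDerivAt (fun s : ℝ => r' s y 0)
      (Real.exp y * (ch x) * ((sh x) ^ 2 - 3 * y) / (sh x) ^ 2) x := by
    have h1 := (((hasDerivAt_const x (Real.exp y)).div (hasDerivAt_sh x)
        (sh_ne hx)).const_mul (1 / S3)).mul (((hasDerivAt_sh x).pow 2).add_const (3 * y))
    have hfun : (fun s : ℝ => r' s y 0) =
        fun s => 1 / S3 * (Real.exp y / Real.sinh (S3 * s)) *
          (Real.sinh (S3 * s) ^ 2 + 3 * y) := by
      funext s; simp [r']
    rw [hfun]
    refine h1.congr_deriv ?_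
    symm
    simp -failIfUnchanged only [Pi.pow_apply, Pi.mul_apply, Pi.div_apply, Pi.sub_apply, Nat.cast_ofNat]
    try field_simp [S3_ne, sh_ne hx]
    try ring
    try exact Or.inl trivial
  exact h.deriv

lemma rx'_1 {x : ℝ} (hx : 0 < x) (y : ℝ) :
    rx' x y 1 = Real.exp (-2 * y) * ((ch x) ^ 2 - (sh x) ^ 2) / (sh x) ^ 2 := by
  have h : HasDerivAt (fun s : ℝ => r' s y 1)
      (Real.exp (-2 * y) * ((ch x) ^ 2 - (sh x) ^ 2) / (sh x) ^ 2) x := by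
    have h1 := ((hasDerivAt_ch x).div (hasDerivAt_sh x)
        (sh_ne hx)).const_mul (-(1 / S3) * Real.exp (-2 * y))
    have hfun : (fun s : ℝ => r' s y 1) =
        fun s => -(1 / S3) * Real.exp (-2 * y) *
          (Real.cosh (S3 * s) / Real.sinh (S3 * s)) := by
      funext s; simp [r', coth]
    rw [hfun]
    refine h1.congr_deriv ?_
    symm
    simp -failIfUnchanged only [Pi.pow_apply, Pi.mul_apply, Pi.div_apply, Pi.sub_apply, Nat.cast_ofNat]
    field_simp [S3_ne, sh_ne hx]
    ring
  exact h.deriv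

lemma rx'_2 {x : ℝ} (hx : 0 < x) (y : ℝ) :
    rx' x y 2 = Real.exp y * (ch x) / (sh x) ^ 2 := by
  have h : HasDerivAt (fun s : ℝ => r' s y 2)
      (Real.exp y * (ch x) / (sh x) ^ 2) x := by
    have h1 := (hasDerivAt_const x (-(1 / S3) * Real.exp y)).div (hasDerivAt_sh x) (sh_ne hx)
    have hfun : (fun s : ℝ => r' s y 2) =
        fun s => -(1 / S3) * Real.exp y / Real.sinh (S3 * s) := by
      funext s; simp [r']
    rw [hfun]
    refine h1.congr_deriv ?_
    symm
    simp -failIfUnchanged only [Pi.pow_apply, Pi.mul_apply, Pi.div_apply, Pi.sub_apply, Nat.cast_ofNat]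
    try field_simp [S3_ne, sh_ne hx]
    try ring
    try exact Or.inl trivial
  exact h.deriv

/- first y-derivatives -/
lemma ry'_0 {x : ℝ} (hx : 0 < x) (y : ℝ) :
    ry' x y 0 = Real.exp y * ((sh x) ^ 2 + 3 * y + 3) / (S3 * (sh x)) := by
  have h : HasDerivAt (fun t : ℝ => r' x t 0)
      (Real.exp y * ((sh x) ^ 2 + 3 * y + 3) / (S3 * (sh x))) y := by
    have h2 : HasDerivAt (fun t : ℝ => (sh x) ^ 2 + 3 * t) 3 y := by
      simpa using ((hasDerivAt_id y).const_mul 3).const_add ((sh x) ^ 2)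
    have h1 := (((Real.hasDerivAt_exp y).div_const (sh x)).const_mul (1 / S3)).mul h2
    have hfun : (fun t : ℝ => r' x t 0) =
        fun t => 1 / S3 * (Real.exp t / (sh x)) * ((sh x) ^ 2 + 3 * t) := by
      funext t; simp [r']
    rw [hfun]
    refine h1.congr_deriv ?_
    symm
    simp -failIfUnchanged only [Pi.pow_apply, Pi.mul_apply, Pi.div_apply, Pi.sub_apply, Nat.cast_ofNat]
    try field_simp [S3_ne, sh_ne hx]
    try ring
    try exact Or.inl trivial
  exact h.deriv

lemma ry'_1 {x : ℝ} (hx : 0 < x) (y : ℝ) :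
    ry' x y 1 = 2 * Real.exp (-2 * y) * (ch x) / (S3 * (sh x)) := by
  have h : HasDerivAt (fun t : ℝ => r' x t 1)
      (2 * Real.exp (-2 * y) * (ch x) / (S3 * (sh x))) y := by
    have h1 := ((hasDerivAt_exp2 y).const_mul (-(1 / S3))).mul_const ((ch x) / (sh x))
    have hfun : (fun t : ℝ => r' x t 1) =
        fun t => -(1 / S3) * Real.exp (-2 * t) * ((ch x) / (sh x)) := by
      funext t; simp [r', coth]
    rw [hfun]
    refine h1.congr_deriv ?_
    symm
    simp -failIfUnchanged only [Pi.pow_apply, Pi.mul_apply, Pi.div_apply, Pi.sub_apply, Nat.cast_ofNat]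
    try field_simp [S3_ne, sh_ne hx]
    try ring
    try exact Or.inl trivial
  exact h.deriv

lemma ry'_2 {x : ℝ} (hx : 0 < x) (y : ℝ) :
    ry' x y 2 = -Real.exp y / (S3 * (sh x)) := by
  have h : HasDerivAt (fun t : ℝ => r' x t 2)
      (-Real.exp y / (S3 * (sh x))) y := by
    have h1 := ((Real.hasDerivAt_exp y).const_mul (-(1 / S3))).div_const (sh x)
    have hfun : (fun t : ℝ => r' x t 2) =
        fun t => -(1 / S3) * Real.exp t / (sh x) := by
      funext t; simp [r']
    rw [hfun]
    refine h1.congr_deriv ?_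
    symm
    simp -failIfUnchanged only [Pi.pow_apply, Pi.mul_apply, Pi.div_apply, Pi.sub_apply, Nat.cast_ofNat]
    try field_simp [S3_ne, sh_ne hx]
    try ring
    try exact Or.inl trivial
  exact h.deriv

/- second derivatives in x : we use the eventual equality with the closed forms. -/
lemma rxx'_0 {x : ℝ} (hx : 0 < x) (y : ℝ) :
    rxx' x y 0 = S3 * Real.exp y *
      ((sh x) ^ 4 - 3 * y * (sh x) ^ 2 + 6 * y * (ch x) ^ 2) / (sh x) ^ 3 := by
  have hev : (fun s : ℝ => rx' s y 0) =ᶠ[nhds x]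
      fun s => Real.exp y * (ch s) * ((sh s) ^ 2 - 3 * y) / (sh s) ^ 2 := by
    filter_upwards [Ioi_mem_nhds hx] with s hs
    exact rx'_0 hs y
  have h : HasDerivAt (fun s : ℝ => Real.exp y * (ch s) * ((sh s) ^ 2 - 3 * y) / (sh s) ^ 2)
      (S3 * Real.exp y *
        ((sh x) ^ 4 - 3 * y * (sh x) ^ 2 + 6 * y * (ch x) ^ 2) / (sh x) ^ 3) x := by
    have h1 := ((((hasDerivAt_ch x).const_mul (Real.exp y)).mul
        (((hasDerivAt_sh x).pow 2).sub_const (3 * y))).div ((hasDerivAt_sh x).pow 2)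
        (pow_ne_zero 2 (sh_ne hx)))
    refine h1.congr_deriv ?_
    symm
    simp -failIfUnchanged only [Pi.pow_apply, Pi.mul_apply, Pi.div_apply, Pi.sub_apply, Nat.cast_ofNat]
    try field_simp [S3_ne, sh_ne hx]
    try ring
    try exact Or.inl trivial
  rw [show rxx' x y 0 = deriv (fun s => rx' s y 0) x from rfl, hev.deriv_eq]
  exact h.deriv

lemma rxx'_1 {x : ℝ} (hx : 0 < x) (y : ℝ) :
    rxx' x y 1 = -2 * S3 * Real.exp (-2 * y) * (ch x) *
      ((ch x) ^ 2 - (sh x) ^ 2) / (sh x) ^ 3 := by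
  have hev : (fun s : ℝ => rx' s y 1) =ᶠ[nhds x]
      fun s => Real.exp (-2 * y) * ((ch s) ^ 2 - (sh s) ^ 2) / (sh s) ^ 2 := by
    filter_upwards [Ioi_mem_nhds hx] with s hs
    exact rx'_1 hs y
  have h : HasDerivAt
      (fun s : ℝ => Real.exp (-2 * y) * ((ch s) ^ 2 - (sh s) ^ 2) / (sh s) ^ 2)
      (-2 * S3 * Real.exp (-2 * y) * (ch x) *
        ((ch x) ^ 2 - (sh x) ^ 2) / (sh x) ^ 3) x := by
    have h1 := (((((hasDerivAt_ch x).pow 2).sub ((hasDerivAt_sh x).pow 2)).const_mul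
        (Real.exp (-2 * y))).div ((hasDerivAt_sh x).pow 2) (pow_ne_zero 2 (sh_ne hx)))
    refine h1.congr_deriv ?_
    symm
    simp -failIfUnchanged only [Pi.pow_apply, Pi.mul_apply, Pi.div_apply, Pi.sub_apply, Nat.cast_ofNat]
    try field_simp [S3_ne, sh_ne hx]
    try ring
    try exact Or.inl trivial
  rw [show rxx' x y 1 = deriv (fun s => rx' s y 1) x from rfl, hev.deriv_eq]
  exact h.deriv

lemma rxx'_2 {x : ℝ} (hx : 0 < x) (y : ℝ) :
    rxx' x y 2 = S3 * Real.exp y * ((sh x) ^ 2 - 2 * (ch x) ^ 2) / (sh x) ^ 3 := by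
  have hev : (fun s : ℝ => rx' s y 2) =ᶠ[nhds x]
      fun s => Real.exp y * (ch s) / (sh s) ^ 2 := by
    filter_upwards [Ioi_mem_nhds hx] with s hs
    exact rx'_2 hs y
  have h : HasDerivAt (fun s : ℝ => Real.exp y * (ch s) / (sh s) ^ 2)
      (S3 * Real.exp y * ((sh x) ^ 2 - 2 * (ch x) ^ 2) / (sh x) ^ 3) x := by
    have h1 := (((hasDerivAt_ch x).const_mul (Real.exp y)).div
        ((hasDerivAt_sh x).pow 2) (pow_ne_zero 2 (sh_ne hx)))
    refine h1.congr_deriv ?_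
    symm
    simp -failIfUnchanged only [Pi.pow_apply, Pi.mul_apply, Pi.div_apply, Pi.sub_apply, Nat.cast_ofNat]
    try field_simp [S3_ne, sh_ne hx]
    try ring
    try exact Or.inl trivial
  rw [show rxx' x y 2 = deriv (fun s => rx' s y 2) x from rfl, hev.deriv_eq]
  exact h.deriv

/- mixed derivatives -/
lemma rxy'_0 {x : ℝ} (hx : 0 < x) (y : ℝ) :
    rxy' x y 0 = Real.exp y * (ch x) * ((sh x) ^ 2 - 3 * y - 3) / (sh x) ^ 2 := by
  have hfun : (fun t : ℝ => rx' x t 0) =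
      fun t => Real.exp t * (ch x) * ((sh x) ^ 2 - 3 * t) / (sh x) ^ 2 :=
    funext fun t => rx'_0 hx t
  have h2 : HasDerivAt (fun t : ℝ => (sh x) ^ 2 - 3 * t) (-3) y := by
    simpa using ((hasDerivAt_id y).const_mul 3).const_sub ((sh x) ^ 2)
  have h : HasDerivAt (fun t : ℝ => Real.exp t * (ch x) * ((sh x) ^ 2 - 3 * t) / (sh x) ^ 2)
      (Real.exp y * (ch x) * ((sh x) ^ 2 - 3 * y - 3) / (sh x) ^ 2) y := by
    have h1 := (((Real.hasDerivAt_exp y).mul_const (ch x)).mul h2).div_const ((sh x) ^ 2)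
    refine h1.congr_deriv ?_
    symm
    simp -failIfUnchanged only [Pi.pow_apply, Pi.mul_apply, Pi.div_apply, Pi.sub_apply, Nat.cast_ofNat]
    try field_simp [S3_ne, sh_ne hx]
    try ring
    try exact Or.inl trivial
  rw [show rxy' x y 0 = deriv (fun t => rx' x t 0) y from rfl, hfun]
  exact h.deriv

lemma rxy'_1 {x : ℝ} (hx : 0 < x) (y : ℝ) :
    rxy' x y 1 = -2 * Real.exp (-2 * y) * ((ch x) ^ 2 - (sh x) ^ 2) / (sh x) ^ 2 := by
  have hfun : (fun t : ℝ => rx' x t 1) =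
      fun t => Real.exp (-2 * t) * ((ch x) ^ 2 - (sh x) ^ 2) / (sh x) ^ 2 :=
    funext fun t => rx'_1 hx t
  have h : HasDerivAt
      (fun t : ℝ => Real.exp (-2 * t) * ((ch x) ^ 2 - (sh x) ^ 2) / (sh x) ^ 2)
      (-2 * Real.exp (-2 * y) * ((ch x) ^ 2 - (sh x) ^ 2) / (sh x) ^ 2) y := by
    have h1 := ((hasDerivAt_exp2 y).mul_const ((ch x) ^ 2 - (sh x) ^ 2)).div_const ((sh x) ^ 2)
    refine h1.congr_deriv ?_
    symm
    simp -failIfUnchanged only [Pi.pow_apply, Pi.mul_apply, Pi.div_apply, Pi.sub_apply, Nat.cast_ofNat]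
    try field_simp [S3_ne, sh_ne hx]
    try ring
    try exact Or.inl trivial
  rw [show rxy' x y 1 = deriv (fun t => rx' x t 1) y from rfl, hfun]
  exact h.deriv

lemma rxy'_2 {x : ℝ} (hx : 0 < x) (y : ℝ) :
    rxy' x y 2 = Real.exp y * (ch x) / (sh x) ^ 2 := by
  have hfun : (fun t : ℝ => rx' x t 2) =
      fun t => Real.exp t * (ch x) / (sh x) ^ 2 :=
    funext fun t => rx'_2 hx t
  have h : HasDerivAt (fun t : ℝ => Real.exp t * (ch x) / (sh x) ^ 2)
      (Real.exp y * (ch x) / (sh x) ^ 2) y := by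
    exact ((Real.hasDerivAt_exp y).mul_const (ch x)).div_const ((sh x) ^ 2)
  rw [show rxy' x y 2 = deriv (fun t => rx' x t 2) y from rfl, hfun]
  exact h.deriv

/- second y-derivatives -/
lemma ryy'_0 {x : ℝ} (hx : 0 < x) (y : ℝ) :
    ryy' x y 0 = Real.exp y * ((sh x) ^ 2 + 3 * y + 6) / (S3 * (sh x)) := by
  have hfun : (fun t : ℝ => ry' x t 0) =
      fun t => Real.exp t * ((sh x) ^ 2 + 3 * t + 3) / (S3 * (sh x)) :=
    funext fun t => ry'_0 hx t
  have h2 : HasDerivAt (fun t : ℝ => (sh x) ^ 2 + 3 * t + 3) 3 y := by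
    simpa using (((hasDerivAt_id y).const_mul 3).const_add ((sh x) ^ 2)).add_const 3
  have h : HasDerivAt (fun t : ℝ => Real.exp t * ((sh x) ^ 2 + 3 * t + 3) / (S3 * (sh x)))
      (Real.exp y * ((sh x) ^ 2 + 3 * y + 6) / (S3 * (sh x))) y := by
    have h1 := ((Real.hasDerivAt_exp y).mul h2).div_const (S3 * (sh x))
    refine h1.congr_deriv ?_
    symm
    simp -failIfUnchanged only [Pi.pow_apply, Pi.mul_apply, Pi.div_apply, Pi.sub_apply, Nat.cast_ofNat]
    try field_simp [S3_ne, sh_ne hx]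
    try ring
    try exact Or.inl trivial
  rw [show ryy' x y 0 = deriv (fun t => ry' x t 0) y from rfl, hfun]
  exact h.deriv

lemma ryy'_1 {x : ℝ} (hx : 0 < x) (y : ℝ) :
    ryy' x y 1 = -4 * Real.exp (-2 * y) * (ch x) / (S3 * (sh x)) := by
  have hfun : (fun t : ℝ => ry' x t 1) =
      fun t => 2 * Real.exp (-2 * t) * (ch x) / (S3 * (sh x)) :=
    funext fun t => ry'_1 hx t
  have h : HasDerivAt (fun t : ℝ => 2 * Real.exp (-2 * t) * (ch x) / (S3 * (sh x)))
      (-4 * Real.exp (-2 * y) * (ch x) / (S3 * (sh x))) y := by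
    have h1 := (((hasDerivAt_exp2 y).const_mul 2).mul_const (ch x)).div_const (S3 * (sh x))
    refine h1.congr_deriv ?_
    symm
    simp -failIfUnchanged only [Pi.pow_apply, Pi.mul_apply, Pi.div_apply, Pi.sub_apply, Nat.cast_ofNat]
    try field_simp [S3_ne, sh_ne hx]
    try ring
    try exact Or.inl trivial
  rw [show ryy' x y 1 = deriv (fun t => ry' x t 1) y from rfl, hfun]
  exact h.deriv

lemma ryy'_2 {x : ℝ} (hx : 0 < x) (y : ℝ) :
    ryy' x y 2 = -Real.exp y / (S3 * (sh x)) := by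
  have hfun : (fun t : ℝ => ry' x t 2) =
      fun t => -Real.exp t / (S3 * (sh x)) :=
    funext fun t => ry'_2 hx t
  have h : HasDerivAt (fun t : ℝ => -Real.exp t / (S3 * (sh x)))
      (-Real.exp y / (S3 * (sh x))) y :=
    ((Real.hasDerivAt_exp y).neg).div_const (S3 * (sh x))
  rw [show ryy' x y 2 = deriv (fun t => ry' x t 2) y from rfl, hfun]
  exact h.deriv

end Aux

set_option maxHeartbeats 4000000 in
/-- The cubic-form determinant `det[r'_x − i r'_y, r'_{xx} − r'_{yy} − 2i r'_{xy}, r']`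
has modulus `8` (that is, `|U| = 1`). -/
theorem cubic_form_modulus_case1 :
    ∀ x : ℝ, 0 < x → ∀ y : ℝ,
      ‖(Matrix.det (Matrix.of
          ![fun i => (rx' x y i : ℂ) - Complex.I * (ry' x y i : ℂ),
            fun i => ((rxx' x y i : ℂ) - (ryy' x y i : ℂ)) - 2 * Complex.I * (rxy' x y i : ℂ),
            fun i => (r' x y i : ℂ)]))‖ = 8 := by
  intro x hx y
  have hdet : (Matrix.det (Matrix.of
      ![fun i => (rx' x y i : ℂ) - Complex.I * (ry' x y i : ℂ),
        fun i => ((rxx' x y i : ℂ) - (ryy' x y i : ℂ)) - 2 * Complex.I * (rxy' x y i : ℂ),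
        fun i => (r' x y i : ℂ)])) = -8 := by
    rw [Matrix.det_fin_three]
    simp only [Matrix.of_apply, Matrix.cons_val', Matrix.cons_val_zero, Matrix.cons_val_one,
      Matrix.head_cons, Matrix.empty_val', Matrix.cons_val_fin_one, Matrix.head_fin_const,
      Matrix.cons_val_two, Matrix.tail_cons]
    rw [r'_0, r'_1, r'_2, rx'_0 hx y, rx'_1 hx y, rx'_2 hx y, ry'_0 hx y, ry'_1 hx y,
      ry'_2 hx y, rxx'_0 hx y, rxx'_1 hx y, rxx'_2 hx y, rxy'_0 hx y, rxy'_1 hx y,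
      rxy'_2 hx y, ryy'_0 hx y, ryy'_1 hx y, ryy'_2 hx y]
    have hu : ((Real.sinh (Real.sqrt 3 * x) : ℝ) : ℂ) ≠ 0 := by
      exact_mod_cast sh_ne hx
    have hs : ((Real.sqrt 3 : ℝ) : ℂ) ≠ 0 := by exact_mod_cast S3_ne
    have hS2 : ((Real.sqrt 3 : ℝ) : ℂ) ^ 2 = 3 := by
      have : (Real.sqrt 3) ^ 2 = (3 : ℝ) := Real.sq_sqrt (by norm_num)
      exact_mod_cast this
    have hC : ((Real.cosh (Real.sqrt 3 * x) : ℝ) : ℂ) ^ 2 =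
        ((Real.sinh (Real.sqrt 3 * x) : ℝ) : ℂ) ^ 2 + 1 := by
      have := Real.cosh_sq (Real.sqrt 3 * x)
      exact_mod_cast this
    have hEF : ((Real.exp (-2 * y) : ℝ) : ℂ) * ((Real.exp y : ℝ) : ℂ) ^ 2 = 1 := by
      have : Real.exp (-2 * y) * Real.exp y ^ 2 = 1 := by
        rw [sq, ← Real.exp_add, ← Real.exp_add, show -2 * y + (y + y) = 0 by ring,
          Real.exp_zero]
      exact_mod_cast this
    set s3 := Real.sqrt 3 with hs3_def
    set u := Real.sinh (s3 * x) with hu_def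
    set c := Real.cosh (s3 * x) with hc_def
    set E := Real.exp y with hE_def
    set F := Real.exp (-2 * y) with hF_def
    push_cast
    have hvu : (u : ℂ) * (u : ℂ)⁻¹ = 1 := mul_inv_cancel₀ hu
    have hts : (s3 : ℂ) * (s3 : ℂ)⁻¹ = 1 := mul_inv_cancel₀ hs
    have hI : Complex.I ^ 2 = -1 := Complex.I_sq
    refine mul_left_cancel₀ (mul_ne_zero (pow_ne_zero 6 hu) (pow_ne_zero 3 hs)) ?_
    linear_combination ((6:ℂ)*(E:ℂ)^2*(u:ℂ)^4*(s3:ℂ)^3*(F:ℂ)*(s3:ℂ)⁻¹^2 + (-12:ℂ)*(E:ℂ)^2*(u:ℂ)^4*(s3:ℂ)^3*(F:ℂ)*Complex.I^2*(s3:ℂ)⁻¹^2 + (6:ℂ)*(E:ℂ)^2*(u:ℂ)^5*(s3:ℂ)^3*(F:ℂ)*(u:ℂ)⁻¹*(s3:ℂ)⁻¹^2 + (-12:ℂ)*(E:ℂ)^2*(u:ℂ)^5*(s3:ℂ)^3*(F:ℂ)*Complex.I^2*(u:ℂ)⁻¹*(s3:ℂ)⁻¹^2 + (6:ℂ)*(E:ℂ)^2*(u:ℂ)^6*(s3:ℂ)^3*(F:ℂ)*(u:ℂ)⁻¹^2*(s3:ℂ)⁻¹^2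 + (-12:ℂ)*(E:ℂ)^2*(u:ℂ)^6*(s3:ℂ)^3*(F:ℂ)*Complex.I^2*(u:ℂ)⁻¹^2*(s3:ℂ)⁻¹^2 + (-2:ℂ)*(E:ℂ)^2*(u:ℂ)^6*(s3:ℂ)^4*(F:ℂ)*(s3:ℂ)⁻¹ + (6:ℂ)*(E:ℂ)^2*(u:ℂ)^7*(s3:ℂ)^3*(F:ℂ)*(u:ℂ)⁻¹^3*(s3:ℂ)⁻¹^2 + (-12:ℂ)*(E:ℂ)^2*(u:ℂ)^7*(s3:ℂ)^3*(F:ℂ)*Complex.I^2*(u:ℂ)⁻¹^3*(s3:ℂ)⁻¹^2 + (-2:ℂ)*(E:ℂ)^2*(u:ℂ)^7*(s3:ℂ)^4*(F:ℂ)*(u:ℂ)⁻¹*(s3:ℂ)⁻¹ + (-2:ℂ)*(E:ℂ)^2*(u:ℂ)^8*(s3:ℂ)^4*(F:ℂ)*(u:ℂ)⁻¹^2*(s3:ℂ)⁻¹ + (-2:ℂ)*(E:ℂ)^2*(u:ℂ)^9*(s3:ℂ)^4*(F:ℂ)*(u:ℂ)⁻¹^3*(s3:ℂ)⁻¹ +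 (-2:ℂ)*(E:ℂ)^2*(u:ℂ)^10*(s3:ℂ)^4*(F:ℂ)*(u:ℂ)⁻¹^4*(s3:ℂ)⁻¹ + (-2:ℂ)*(E:ℂ)^2*(u:ℂ)^11*(s3:ℂ)^4*(F:ℂ)*(u:ℂ)⁻¹^5*(s3:ℂ)⁻¹ + (-6:ℂ)*(E:ℂ)^2*(c:ℂ)*(u:ℂ)^3*(s3:ℂ)^3*(F:ℂ)*Complex.I*(s3:ℂ)⁻¹ + (27:ℂ)*(E:ℂ)^2*(c:ℂ)*(u:ℂ)^3*(s3:ℂ)^3*(F:ℂ)*Complex.I*(s3:ℂ)⁻¹^3 + (3:ℂ)*(E:ℂ)^2*(c:ℂ)*(u:ℂ)^3*(s3:ℂ)^4*(F:ℂ)*Complex.I*(s3:ℂ)⁻¹^2 + (-6:ℂ)*(E:ℂ)^2*(c:ℂ)*(u:ℂ)^4*(s3:ℂ)^3*(F:ℂ)*Complex.I*(u:ℂ)⁻¹*(s3:ℂ)⁻¹ + (27:ℂ)*(E:ℂ)^2*(c:ℂ)*(u:ℂ)^4*(s3:ℂ)^3*(F:ℂ)*Complex.I*(u:ℂ)⁻¹*(s3:ℂ)⁻¹^3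 + (3:ℂ)*(E:ℂ)^2*(c:ℂ)*(u:ℂ)^4*(s3:ℂ)^4*(F:ℂ)*Complex.I*(u:ℂ)⁻¹*(s3:ℂ)⁻¹^2 + (12:ℂ)*(E:ℂ)^2*(c:ℂ)*(u:ℂ)^5*(s3:ℂ)^3*(F:ℂ)*Complex.I*(s3:ℂ)⁻¹ + (-6:ℂ)*(E:ℂ)^2*(c:ℂ)*(u:ℂ)^5*(s3:ℂ)^3*(F:ℂ)*Complex.I*(u:ℂ)⁻¹^2*(s3:ℂ)⁻¹ + (27:ℂ)*(E:ℂ)^2*(c:ℂ)*(u:ℂ)^5*(s3:ℂ)^3*(F:ℂ)*Complex.I*(u:ℂ)⁻¹^2*(s3:ℂ)⁻¹^3 + (-6:ℂ)*(E:ℂ)^2*(c:ℂ)*(u:ℂ)^5*(s3:ℂ)^4*(F:ℂ)*Complex.I*(s3:ℂ)⁻¹^2 + (3:ℂ)*(E:ℂ)^2*(c:ℂ)*(u:ℂ)^5*(s3:ℂ)^4*(F:ℂ)*Complex.I*(u:ℂ)⁻¹^2*(s3:ℂ)⁻¹^2 + (12:ℂ)*(E:ℂ)^2*(c:ℂ)*(u:ℂ)^6*(s3:ℂ)^3*(F:ℂ)*Complex.I*(u:ℂ)⁻¹*(s3:ℂ)⁻¹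 + (-6:ℂ)*(E:ℂ)^2*(c:ℂ)*(u:ℂ)^6*(s3:ℂ)^3*(F:ℂ)*Complex.I*(u:ℂ)⁻¹^3*(s3:ℂ)⁻¹ + (-6:ℂ)*(E:ℂ)^2*(c:ℂ)*(u:ℂ)^6*(s3:ℂ)^4*(F:ℂ)*Complex.I*(u:ℂ)⁻¹*(s3:ℂ)⁻¹^2 + (3:ℂ)*(E:ℂ)^2*(c:ℂ)*(u:ℂ)^6*(s3:ℂ)^4*(F:ℂ)*Complex.I*(u:ℂ)⁻¹^3*(s3:ℂ)⁻¹^2 + (12:ℂ)*(E:ℂ)^2*(c:ℂ)*(u:ℂ)^7*(s3:ℂ)^3*(F:ℂ)*Complex.I*(u:ℂ)⁻¹^2*(s3:ℂ)⁻¹ + (-6:ℂ)*(E:ℂ)^2*(c:ℂ)*(u:ℂ)^7*(s3:ℂ)^3*(F:ℂ)*Complex.I*(u:ℂ)⁻¹^4*(s3:ℂ)⁻¹ + (-6:ℂ)*(E:ℂ)^2*(c:ℂ)*(u:ℂ)^7*(s3:ℂ)^4*(F:ℂ)*Complex.I*(u:ℂ)⁻¹^2*(s3:ℂ)⁻¹^2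 + (3:ℂ)*(E:ℂ)^2*(c:ℂ)*(u:ℂ)^7*(s3:ℂ)^4*(F:ℂ)*Complex.I*(u:ℂ)⁻¹^4*(s3:ℂ)⁻¹^2 + (12:ℂ)*(E:ℂ)^2*(c:ℂ)*(u:ℂ)^8*(s3:ℂ)^3*(F:ℂ)*Complex.I*(u:ℂ)⁻¹^3*(s3:ℂ)⁻¹ + (-6:ℂ)*(E:ℂ)^2*(c:ℂ)*(u:ℂ)^8*(s3:ℂ)^4*(F:ℂ)*Complex.I*(u:ℂ)⁻¹^3*(s3:ℂ)⁻¹^2 + (12:ℂ)*(E:ℂ)^2*(c:ℂ)*(u:ℂ)^9*(s3:ℂ)^3*(F:ℂ)*Complex.I*(u:ℂ)⁻¹^4*(s3:ℂ)⁻¹ + (-6:ℂ)*(E:ℂ)^2*(c:ℂ)*(u:ℂ)^9*(s3:ℂ)^4*(F:ℂ)*Complex.I*(u:ℂ)⁻¹^4*(s3:ℂ)⁻¹^2 + (-6:ℂ)*(E:ℂ)^2*(c:ℂ)^2*(u:ℂ)^4*(s3:ℂ)^3*(F:ℂ)*(s3:ℂ)⁻¹^2 + (12:ℂ)*(E:ℂ)^2*(c:ℂ)^2*(u:ℂ)^4*(s3:ℂ)^3*(F:ℂ)*Complex.I^2*(s3:ℂ)⁻¹^2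 + (-6:ℂ)*(E:ℂ)^2*(c:ℂ)^2*(u:ℂ)^5*(s3:ℂ)^3*(F:ℂ)*(u:ℂ)⁻¹*(s3:ℂ)⁻¹^2 + (12:ℂ)*(E:ℂ)^2*(c:ℂ)^2*(u:ℂ)^5*(s3:ℂ)^3*(F:ℂ)*Complex.I^2*(u:ℂ)⁻¹*(s3:ℂ)⁻¹^2 + (-6:ℂ)*(E:ℂ)^2*(c:ℂ)^2*(u:ℂ)^6*(s3:ℂ)^3*(F:ℂ)*(u:ℂ)⁻¹^2*(s3:ℂ)⁻¹^2 + (12:ℂ)*(E:ℂ)^2*(c:ℂ)^2*(u:ℂ)^6*(s3:ℂ)^3*(F:ℂ)*Complex.I^2*(u:ℂ)⁻¹^2*(s3:ℂ)⁻¹^2 + (-6:ℂ)*(E:ℂ)^2*(c:ℂ)^2*(u:ℂ)^7*(s3:ℂ)^3*(F:ℂ)*(u:ℂ)⁻¹^3*(s3:ℂ)⁻¹^2 + (12:ℂ)*(E:ℂ)^2*(c:ℂ)^2*(u:ℂ)^7*(s3:ℂ)^3*(F:ℂ)*Complex.I^2*(u:ℂ)⁻¹^3*(s3:ℂ)⁻¹^2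 + (-12:ℂ)*(E:ℂ)^2*(c:ℂ)^3*(u:ℂ)^3*(s3:ℂ)^3*(F:ℂ)*Complex.I*(s3:ℂ)⁻¹ + (6:ℂ)*(E:ℂ)^2*(c:ℂ)^3*(u:ℂ)^3*(s3:ℂ)^4*(F:ℂ)*Complex.I*(s3:ℂ)⁻¹^2 + (-12:ℂ)*(E:ℂ)^2*(c:ℂ)^3*(u:ℂ)^4*(s3:ℂ)^3*(F:ℂ)*Complex.I*(u:ℂ)⁻¹*(s3:ℂ)⁻¹ + (6:ℂ)*(E:ℂ)^2*(c:ℂ)^3*(u:ℂ)^4*(s3:ℂ)^4*(F:ℂ)*Complex.I*(u:ℂ)⁻¹*(s3:ℂ)⁻¹^2 + (-12:ℂ)*(E:ℂ)^2*(c:ℂ)^3*(u:ℂ)^5*(s3:ℂ)^3*(F:ℂ)*Complex.I*(u:ℂ)⁻¹^2*(s3:ℂ)⁻¹ + (6:ℂ)*(E:ℂ)^2*(c:ℂ)^3*(u:ℂ)^5*(s3:ℂ)^4*(F:ℂ)*Complex.I*(u:ℂ)⁻¹^2*(s3:ℂ)⁻¹^2 + (-12:ℂ)*(E:ℂ)^2*(c:ℂ)^3*(u:ℂ)^6*(s3:ℂ)^3*(F:ℂ)*Complex.I*(u:ℂ)⁻¹^3*(s3:ℂ)⁻¹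 + (6:ℂ)*(E:ℂ)^2*(c:ℂ)^3*(u:ℂ)^6*(s3:ℂ)^4*(F:ℂ)*Complex.I*(u:ℂ)⁻¹^3*(s3:ℂ)⁻¹^2 + (-12:ℂ)*(E:ℂ)^2*(c:ℂ)^3*(u:ℂ)^7*(s3:ℂ)^3*(F:ℂ)*Complex.I*(u:ℂ)⁻¹^4*(s3:ℂ)⁻¹ + (6:ℂ)*(E:ℂ)^2*(c:ℂ)^3*(u:ℂ)^7*(s3:ℂ)^4*(F:ℂ)*Complex.I*(u:ℂ)⁻¹^4*(s3:ℂ)⁻¹^2) * hvu + ((6:ℂ)*(E:ℂ)^2*(u:ℂ)^4*(s3:ℂ)*(F:ℂ) + (-12:ℂ)*(E:ℂ)^2*(u:ℂ)^4*(s3:ℂ)*(F:ℂ)*Complex.I^2 + (6:ℂ)*(E:ℂ)^2*(u:ℂ)^4*(s3:ℂ)^2*(F:ℂ)*(s3:ℂ)⁻¹ + (-12:ℂ)*(E:ℂ)^2*(u:ℂ)^4*(s3:ℂ)^2*(F:ℂ)*Complex.I^2*(s3:ℂ)⁻¹ + (-2:ℂ)*(E:ℂ)^2*(u:ℂ)^6*(s3:ℂ)^3*(F:ℂ)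 + (27:ℂ)*(E:ℂ)^2*(c:ℂ)*(u:ℂ)^3*(F:ℂ)*Complex.I + (27:ℂ)*(E:ℂ)^2*(c:ℂ)*(u:ℂ)^3*(s3:ℂ)*(F:ℂ)*Complex.I*(s3:ℂ)⁻¹ + (-3:ℂ)*(E:ℂ)^2*(c:ℂ)*(u:ℂ)^3*(s3:ℂ)^2*(F:ℂ)*Complex.I + (27:ℂ)*(E:ℂ)^2*(c:ℂ)*(u:ℂ)^3*(s3:ℂ)^2*(F:ℂ)*Complex.I*(s3:ℂ)⁻¹^2 + (3:ℂ)*(E:ℂ)^2*(c:ℂ)*(u:ℂ)^3*(s3:ℂ)^3*(F:ℂ)*Complex.I*(s3:ℂ)⁻¹ + (6:ℂ)*(E:ℂ)^2*(c:ℂ)*(u:ℂ)^5*(s3:ℂ)^2*(F:ℂ)*Complex.I + (-6:ℂ)*(E:ℂ)^2*(c:ℂ)*(u:ℂ)^5*(s3:ℂ)^3*(F:ℂ)*Complex.I*(s3:ℂ)⁻¹ + (-6:ℂ)*(E:ℂ)^2*(c:ℂ)^2*(u:ℂ)^4*(s3:ℂ)*(F:ℂ) + (12:ℂ)*(E:ℂ)^2*(c:ℂ)^2*(u:ℂ)^4*(s3:ℂ)*(F:ℂ)*Complex.I^2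 + (-6:ℂ)*(E:ℂ)^2*(c:ℂ)^2*(u:ℂ)^4*(s3:ℂ)^2*(F:ℂ)*(s3:ℂ)⁻¹ + (12:ℂ)*(E:ℂ)^2*(c:ℂ)^2*(u:ℂ)^4*(s3:ℂ)^2*(F:ℂ)*Complex.I^2*(s3:ℂ)⁻¹ + (-6:ℂ)*(E:ℂ)^2*(c:ℂ)^3*(u:ℂ)^3*(s3:ℂ)^2*(F:ℂ)*Complex.I + (6:ℂ)*(E:ℂ)^2*(c:ℂ)^3*(u:ℂ)^3*(s3:ℂ)^3*(F:ℂ)*Complex.I*(s3:ℂ)⁻¹) * hts + ((6:ℂ)*(u:ℂ)^4*(s3:ℂ) + (-12:ℂ)*(u:ℂ)^4*(s3:ℂ)*Complex.I^2 + (-2:ℂ)*(u:ℂ)^6*(s3:ℂ)^3 + (27:ℂ)*(c:ℂ)*(u:ℂ)^3*Complex.I + (-3:ℂ)*(c:ℂ)*(u:ℂ)^3*(s3:ℂ)^2*Complex.I + (6:ℂ)*(c:ℂ)*(u:ℂ)^5*(s3:ℂ)^2*Complex.I + (-6:ℂ)*(c:ℂ)^2*(u:ℂ)^4*(s3:ℂ)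 + (12:ℂ)*(c:ℂ)^2*(u:ℂ)^4*(s3:ℂ)*Complex.I^2 + (-6:ℂ)*(c:ℂ)^3*(u:ℂ)^3*(s3:ℂ)^2*Complex.I) * hEF + ((-6:ℂ)*(u:ℂ)^4*(s3:ℂ) + (12:ℂ)*(u:ℂ)^4*(s3:ℂ)*Complex.I^2 + (-6:ℂ)*(c:ℂ)*(u:ℂ)^3*(s3:ℂ)^2*Complex.I) * hC + ((6:ℂ)*(u:ℂ)^6*(s3:ℂ) + (-9:ℂ)*(c:ℂ)*(u:ℂ)^3*Complex.I) * hS2 + ((12:ℂ)*(u:ℂ)^6*(s3:ℂ)) * hI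
  rw [hdet]
  simp
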